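/- For each α > 0 with t = q^{4α}, and for any polynomial f ∈ Pol(ℂ)_q, there exists a unique formal series Σ_{j,k≥0} a_{jk} z^j z*^k (the covariant symbol) such that the operator f̂ obtained by substituting ẑ, ẑ* equals Σ a_{jk} ẑ^j ẑ*^k, and the map f ↦ f̂ ↦ covariant symbol recovers the Wick-ordered decomposition: if f = Σ_{j,k} a_{jk} z^j z*^k then the operator Σ a_{jk} ẑ^j ẑ*^k has covariant symbol f. -/

import Mathlib

open Finset Polynomial

def qPoch (a x : ℝ) (k : ℕ) : ℝ := ∏ i ∈ range k, (1 - x ^ i * a)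

noncomputable def wgt (q α : ℝ) (k : ℕ) : ℝ :=
  qPoch (q ^ 2) (q ^ 2) k / qPoch (q ^ (4 * α + 2)) (q ^ 2) k

/-- The inner product `(·,·)_α` on `ℂ[z]`, linear in the first argument. -/
noncomputable def pair (q α : ℝ) (p r : Polynomial ℂ) : ℂ :=
  ∑ k ∈ p.support, p.coeff k * (starRingEnd ℂ) (r.coeff k) * (wgt q α k : ℂ)

/-- `a : ℕ×ℕ → ℂ` is a covariant symbol of the operator `T` on `ℂ[z]`:
`T = Σ_{j,k} a_{jk} ẑ^j ẑ*^k` in the weak topology determined by the functionals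
`A ↦ (Aψ₁, ψ₂)_α`, `ψ₁, ψ₂ ∈ ℂ[z]`. Here `zs` plays the role of `ẑ*`. -/
def IsCovSym (q α : ℝ) (zs : Polynomial ℂ →ₗ[ℂ] Polynomial ℂ)
    (T : Polynomial ℂ → Polynomial ℂ) (a : ℕ × ℕ → ℂ) : Prop :=
  ∀ ψ₁ ψ₂ : Polynomial ℂ,
    pair q α (T ψ₁) ψ₂ =
      ∑' jk : ℕ × ℕ, a jk * pair q α (X ^ jk.1 * (zs ^ jk.2) ψ₁) ψ₂

/-- for any `f = Σ a_{jk} z^j z*^k ∈ Pol(ℂ)_q` (a finitely supported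
family of coefficients in the basis `z^j z*^k`), the operator
`f̂ = Σ a_{jk} ẑ^j ẑ*^k` has a unique covariant symbol, namely `f` itself.
Here `zs = ẑ*` is characterized by the adjoint relation `(zs u, v)_α = (u, z·v)_α`. -/
lemma wgt_pos {q α : ℝ} (hq0 : 0 < q) (hq1 : q < 1) (hα : 0 < α) (k : ℕ) :
    0 < wgt q α k := by
  have hq2 : 0 < q ^ (2:ℕ) := by positivity
  have hq2' : q ^ (2:ℕ) < 1 := by nlinarith
  have ha : 0 < q ^ (4 * α + 2) := Real.rpow_pos_of_pos hq0 _
  have ha' : q ^ (4 * α + 2) < 1 := Real.rpow_lt_one hq0.le hq1 (by linarith)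
  unfold wgt qPoch
  apply div_pos <;> apply Finset.prod_pos <;> intro i _
  · have h1 : (q ^ (2:ℕ)) ^ i ≤ 1 := pow_le_one₀ hq2.le hq2'.le
    nlinarith
  · have h1 : (q ^ (2:ℕ)) ^ i ≤ 1 := pow_le_one₀ hq2.le hq2'.le
    nlinarith

lemma wgt_zero (q α : ℝ) : wgt q α 0 = 1 := by simp [wgt, qPoch]

lemma pair_eq_sum {q α : ℝ} {p : Polynomial ℂ} (r : Polynomial ℂ) (s : Finset ℕ)
    (h : p.support ⊆ s) :
    pair q α p r = ∑ k ∈ s, p.coeff k * (starRingEnd ℂ) (r.coeff k) * (wgt q α k : ℂ) := by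
  unfold pair
  exact Finset.sum_subset h (by
    intro k _ hk
    rw [Polynomial.notMem_support_iff.mp hk]
    ring)

lemma pair_zero_left (q α : ℝ) (r : Polynomial ℂ) : pair q α 0 r = 0 := by
  simp [pair]

lemma pair_sum_left {q α : ℝ} {ι : Type*} (s : Finset ι) (c : ι → ℂ)
    (p : ι → Polynomial ℂ) (r : Polynomial ℂ) :
    pair q α (∑ i ∈ s, c i • p i) r = ∑ i ∈ s, c i * pair q α (p i) r := by
  classical
  set S0 : Finset ℕ :=
    (∑ i ∈ s, c i • p i).support ∪ s.biUnion (fun i => (p i).support) with hS0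
  rw [pair_eq_sum r S0 Finset.subset_union_left]
  have hsub : ∀ i ∈ s, (p i).support ⊆ S0 := fun i hi =>
    (Finset.subset_biUnion_of_mem (fun i => (p i).support) hi).trans
      Finset.subset_union_right
  calc ∑ k ∈ S0, (∑ i ∈ s, c i • p i).coeff k * (starRingEnd ℂ) (r.coeff k) * (wgt q α k : ℂ)
      = ∑ k ∈ S0, ∑ i ∈ s,
          c i * ((p i).coeff k * (starRingEnd ℂ) (r.coeff k) * (wgt q α k : ℂ)) := by
        refine Finset.sum_congr rfl fun k _ => ?_
        rw [Polynomial.finset_sum_coeff, Finset.sum_mul, Finset.sum_mul]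
        refine Finset.sum_congr rfl fun i _ => ?_
        rw [Polynomial.coeff_smul]
        simp only [smul_eq_mul]
        ring
    _ = ∑ i ∈ s, c i * pair q α (p i) r := by
        rw [Finset.sum_comm]
        refine Finset.sum_congr rfl fun i hi => ?_
        rw [pair_eq_sum r S0 (hsub i hi), Finset.mul_sum]

lemma pair_X_pow_right {q α : ℝ} (p : Polynomial ℂ) (n : ℕ) :
    pair q α p ((X : Polynomial ℂ) ^ n) = p.coeff n * (wgt q α n : ℂ) := by
  unfold pair
  rw [Finset.sum_eq_single n]
  · simp [coeff_X_pow]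
  · intro k _ hkn
    rw [coeff_X_pow, if_neg hkn]
    simp
  · intro hn
    rw [Polynomial.notMem_support_iff.mp hn]
    ring

section zs

variable {q α : ℝ} (hq0 : 0 < q) (hq1 : q < 1) (hα : 0 < α)
variable (zs : Polynomial ℂ →ₗ[ℂ] Polynomial ℂ)
variable (hzs : ∀ u v : Polynomial ℂ, pair q α (zs u) v = pair q α u (X * v))

include hq0 hq1 hα hzs

lemma zs_coeff (u : Polynomial ℂ) (r : ℕ) :
    (zs u).coeff r = u.coeff (r + 1) * ((wgt q α (r + 1) / wgt q α r : ℝ) : ℂ) := by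
  have hw : (wgt q α r : ℂ) ≠ 0 := by
    exact_mod_cast Complex.ofReal_ne_zero.mpr (wgt_pos hq0 hq1 hα r).ne'
  have h2 := hzs u ((X : Polynomial ℂ) ^ r)
  rw [pair_X_pow_right, ← pow_succ', pair_X_pow_right] at h2
  push_cast
  field_simp
  linear_combination h2

lemma zs_one : zs (1 : Polynomial ℂ) = 0 := by
  ext r
  rw [zs_coeff hq0 hq1 hα zs hzs]
  simp [Polynomial.coeff_one]

lemma zs_X_pow (m : ℕ) :
    zs ((X : Polynomial ℂ) ^ (m + 1)) =
      ((wgt q α (m + 1) / wgt q α m : ℝ) : ℂ) • X ^ m := by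
  ext r
  rw [zs_coeff hq0 hq1 hα zs hzs, Polynomial.coeff_smul, coeff_X_pow, coeff_X_pow]
  by_cases h : m = r
  · subst h; simp
  · rw [if_neg (by omega), if_neg (fun hh => h hh.symm)]
    simp

lemma zs_pow_X (k m : ℕ) :
    (zs ^ k) ((X : Polynomial ℂ) ^ m) =
      if k ≤ m then ((wgt q α m / wgt q α (m - k) : ℝ) : ℂ) • X ^ (m - k) else 0 := by
  induction k generalizing m with
  | zero =>
      simp [div_self (wgt_pos hq0 hq1 hα m).ne']
  | succ k ih =>
      rw [pow_succ, Module.End.mul_apply]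
      cases m with
      | zero =>
          rw [pow_zero, zs_one hq0 hq1 hα zs hzs, map_zero, if_neg (by omega)]
      | succ m' =>
          rw [zs_X_pow hq0 hq1 hα zs hzs, map_smul, ih]
          by_cases h : k ≤ m'
          · rw [if_pos h, if_pos (by omega), smul_smul]
            have h1 : (wgt q α m' : ℂ) ≠ 0 := by
              exact_mod_cast Complex.ofReal_ne_zero.mpr (wgt_pos hq0 hq1 hα m').ne'
            have h2 : m' - k = m' + 1 - (k + 1) := by omega
            rw [← h2]
            congr 1
            push_cast
            field_simp
          · rw [if_neg h, if_neg (by omega), smul_zero]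

lemma key_pair (j k m n : ℕ) :
    pair q α ((X : Polynomial ℂ) ^ j * (zs ^ k) (X ^ m)) (X ^ n) =
      if k ≤ m ∧ n = j + (m - k) then
        (((wgt q α m / wgt q α (m - k)) * wgt q α n : ℝ) : ℂ) else 0 := by
  rw [zs_pow_X hq0 hq1 hα zs hzs]
  by_cases h : k ≤ m
  · rw [if_pos h, mul_smul_comm, ← pow_add]
    have := pair_X_pow_right (q := q) (α := α)
      (((wgt q α m / wgt q α (m - k) : ℝ) : ℂ) • (X : Polynomial ℂ) ^ (j + (m - k))) n
    rw [this, Polynomial.coeff_smul, coeff_X_pow]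
    by_cases hn : n = j + (m - k)
    · rw [if_pos (by omega), if_pos ⟨h, hn⟩]
      simp only [smul_eq_mul, mul_one]
      push_cast
      ring
    · rw [if_neg (by omega), if_neg (by tauto)]
      simp
  · rw [if_neg h, mul_zero, pair_zero_left, if_neg (by tauto)]

end zs

theorem covariant_symbol_exists_unique (q α : ℝ) (hq0 : 0 < q) (hq1 : q < 1) (hα : 0 < α)
    (zs : Polynomial ℂ →ₗ[ℂ] Polynomial ℂ)
    (hzs : ∀ u v : Polynomial ℂ, pair q α (zs u) v = pair q α u (X * v))
    (f : (ℕ × ℕ) →₀ ℂ) :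
    IsCovSym q α zs
        (fun ψ => ∑ jk ∈ f.support, f jk • (X ^ jk.1 * (zs ^ jk.2) ψ)) (⇑f) ∧
      ∀ a : ℕ × ℕ → ℂ,
        IsCovSym q α zs
            (fun ψ => ∑ jk ∈ f.support, f jk • (X ^ jk.1 * (zs ^ jk.2) ψ)) a →
          a = ⇑f := by
  classical
  have hex : IsCovSym q α zs
      (fun ψ => ∑ jk ∈ f.support, f jk • (X ^ jk.1 * (zs ^ jk.2) ψ)) (⇑f) := by
    intro ψ₁ ψ₂
    rw [pair_sum_left f.support (fun jk => f jk) (fun jk => X ^ jk.1 * (zs ^ jk.2) ψ₁) ψ₂]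
    rw [tsum_eq_sum (s := f.support) (fun jk hjk => by
      rw [Finsupp.notMem_support_iff.mp hjk, zero_mul])]
  refine ⟨hex, fun a ha => ?_⟩
  -- the finite set of (j,k) for which pair (X^j zs^k X^m) X^n ≠ 0
  set S : ℕ → ℕ → Finset (ℕ × ℕ) := fun m n =>
    ((range (m + 1)).filter fun k' => m - k' ≤ n).image fun k' => (n - (m - k'), k') with hS
  have key := key_pair hq0 hq1 hα zs hzs
  have hmem : ∀ (jk : ℕ × ℕ) (m n : ℕ),
      jk ∈ S m n ↔ jk.2 ≤ m ∧ n = jk.1 + (m - jk.2) := by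
    rintro ⟨j, k⟩ m n
    simp only [hS, Finset.mem_image, Finset.mem_filter, Finset.mem_range, Prod.mk.injEq]
    constructor
    · rintro ⟨k', ⟨hk1, hk2⟩, hj, rfl⟩
      omega
    · rintro ⟨h1, h2⟩
      exact ⟨k, ⟨by omega, by omega⟩, by omega, rfl⟩
  have hvan : ∀ (b : ℕ × ℕ → ℂ) (m n : ℕ), ∀ jk ∉ S m n,
      b jk * pair q α (X ^ jk.1 * (zs ^ jk.2) ((X : Polynomial ℂ) ^ m)) (X ^ n) = 0 := by
    intro b m n jk hjk
    rw [key jk.1 jk.2 m n, if_neg (fun hc => hjk ((hmem jk m n).mpr hc)), mul_zero]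
  have hEq : ∀ m n : ℕ,
      ∑ jk ∈ S m n, (a jk - f jk) *
        pair q α (X ^ jk.1 * (zs ^ jk.2) ((X : Polynomial ℂ) ^ m)) (X ^ n) = 0 := by
    intro m n
    have h1 := (ha (X ^ m) (X ^ n)).symm.trans (hex (X ^ m) (X ^ n))
    rw [tsum_eq_sum (s := S m n) (hvan a m n),
        tsum_eq_sum (s := S m n) (hvan (⇑f) m n)] at h1
    rw [← sub_eq_zero] at h1
    rw [← Finset.sum_sub_distrib] at h1
    rw [← h1]
    exact Finset.sum_congr rfl fun jk _ => by ring
  have hb : ∀ k j : ℕ, a (j, k) - f (j, k) = 0 := by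
    intro k
    induction k using Nat.strong_induction_on with
    | _ k IH =>
      intro j
      have h := hEq k j
      have hinj : ∀ x ∈ (range (k + 1)).filter fun k' => k - k' ≤ j,
          ∀ y ∈ (range (k + 1)).filter fun k' => k - k' ≤ j,
          (fun k' => ((j - (k - k'), k') : ℕ × ℕ)) x =
            (fun k' => ((j - (k - k'), k') : ℕ × ℕ)) y → x = y := by
        intro x _ y _ hxy
        exact (Prod.mk.injEq _ _ _ _).mp hxy |>.2
      rw [hS, Finset.sum_image hinj] at h
      rw [Finset.sum_eq_single k (fun k' hk' hne => by
            simp only [Finset.mem_filter, Finset.mem_range] at hk'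
            rw [IH k' (by omega) _, zero_mul])
          (fun hk => absurd (by
            simp only [Finset.mem_filter, Finset.mem_range]
            omega) hk)] at h
      rw [key (j - (k - k)) k k j] at h
      have hcond : k ≤ k ∧ j = (j - (k - k)) + (k - k) := by omega
      rw [if_pos hcond] at h
      have hw : (((wgt q α k / wgt q α (k - k)) * wgt q α j : ℝ) : ℂ) ≠ 0 := by
        rw [Complex.ofReal_ne_zero]
        have h1 := wgt_pos hq0 hq1 hα k
        have h2 := wgt_pos hq0 hq1 hα (k - k)
        have h3 := wgt_pos hq0 hq1 hα j
        positivity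
      have := (mul_eq_zero.mp h).resolve_right hw
      simpa using this
  funext jk
  exact sub_eq_zero.mp (hb jk.2 jk.1)
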